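/- arXiv:1306.4872 — 4 statements merged into one kernel-verified Lean document; each statement's English description precedes it below -/
import Mathlib

section
/- Let A < B be real numbers and let Ψ₀,…,Ψ_{k−1} : [A,B] → ℝ be a Chebyshev system. If σ₁ and σ₂ are two finitely supported nonnegative measures on [A,B] such that the union of their supports contains at most k points and ∫_A^B Ψ_i dσ₁ = ∫_A^B Ψ_i dσ₂ for all i = 0,…,k−1, then σ₁ = σ₂. -/
open MeasureTheory Set

/-- A family of functions `Ψ₀, …, Ψ_{k-1}` is a Chebyshev system on `[A,B]` if for all
points `A ≤ x₀ < x₁ < ⋯ < x_{k-1} ≤ B` the matrix `(Ψ i (x j))` has positive determinant. -/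
def IsChebyshevSystem (A B : ℝ) {k : ℕ} (Ψ : Fin k → ℝ → ℝ) : Prop :=
  ∀ x : Fin k → ℝ, StrictMono x → (∀ j, x j ∈ Set.Icc A B) →
    0 < (Matrix.of fun i j : Fin k => Ψ i (x j)).det

/-- `σ` is a finitely supported nonnegative measure on `[A,B]`, supported exactly on the
finite set `s ⊆ [A,B]`, i.e. `σ = ∑_{x ∈ s} a_x δ_x` with positive finite weights. -/
def IsAtomicMeasureOn (A B : ℝ) (σ : Measure ℝ) (s : Finset ℝ) : Prop :=
  ↑s ⊆ Set.Icc A B ∧ (∀ x ∈ s, 0 < σ {x} ∧ σ {x} < ⊤) ∧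
    σ = ∑ x ∈ s, σ {x} • Measure.dirac x

lemma aux_integrable_dirac (f : ℝ → ℝ) (x : ℝ) : Integrable f (Measure.dirac x) := by
  have hae : f =ᵐ[Measure.dirac x] fun _ => f x := by
    rw [Filter.EventuallyEq, ae_iff]
    have hsub : {a : ℝ | ¬ f a = f x} ⊆ {x}ᶜ := by
      intro a ha hax
      simp only [Set.mem_singleton_iff] at hax
      exact ha (by rw [hax])
    refine measure_mono_null hsub ?_
    rw [Measure.dirac_apply]
    simp [Set.indicator]
  exact (integrable_const (f x)).congr hae.symm

lemma aux_integral_sum_dirac (s : Finset ℝ) (c : ℝ → ENNReal)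
    (hfin : ∀ x ∈ s, c x ≠ ⊤) (f : ℝ → ℝ) :
    ∫ x, f x ∂(∑ x ∈ s, c x • Measure.dirac x) = ∑ x ∈ s, (c x).toReal * f x := by
  rw [integral_finset_sum_measure (fun x hx =>
    (aux_integrable_dirac f x).smul_measure (hfin x hx))]
  refine Finset.sum_congr rfl fun x hx => ?_
  rw [integral_smul_measure, integral_dirac]
  simp [smul_eq_mul]

lemma aux_meas_notMem {σ : Measure ℝ} {s : Finset ℝ}
    (hrep : σ = ∑ x ∈ s, σ {x} • Measure.dirac x) {y : ℝ} (hy : y ∉ s) : σ {y} = 0 := by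
  conv_lhs => rw [hrep]
  rw [Measure.finset_sum_apply]
  refine Finset.sum_eq_zero fun x hx => ?_
  have hxy : x ≠ y := fun h => hy (h ▸ hx)
  simp [Measure.smul_apply, Measure.dirac_apply, Set.indicator, hxy]

/-- If `σ₁, σ₂` are finitely supported nonnegative measures on `[A,B]` whose supports
together contain at most `k` points, and they have the same moments with respect to a
Chebyshev system `Ψ₀, …, Ψ_{k-1}` on `[A,B]`, then `σ₁ = σ₂`. -/
theorem unique_representation_of_few_atoms
    {k : ℕ} (A B : ℝ) (hAB : A < B) (Ψ : Fin k → ℝ → ℝ)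
    (hcont : ∀ i, ContinuousOn (Ψ i) (Set.Icc A B))
    (hCheb : IsChebyshevSystem A B Ψ)
    (σ₁ σ₂ : Measure ℝ) (s₁ s₂ : Finset ℝ)
    (h₁ : IsAtomicMeasureOn A B σ₁ s₁) (h₂ : IsAtomicMeasureOn A B σ₂ s₂)
    (hcard : (s₁ ∪ s₂).card ≤ k)
    (hmom : ∀ i, ∫ x, Ψ i x ∂σ₁ = ∫ x, Ψ i x ∂σ₂) :
    σ₁ = σ₂ := by
  obtain ⟨hs₁sub, hs₁pos, hrep₁⟩ := h₁
  obtain ⟨hs₂sub, hs₂pos, hrep₂⟩ := h₂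
  set s : Finset ℝ := s₁ ∪ s₂ with hsdef
  have hfin₁ : ∀ x, σ₁ {x} ≠ ⊤ := by
    intro x
    by_cases hx : x ∈ s₁
    · exact (hs₁pos x hx).2.ne
    · rw [aux_meas_notMem hrep₁ hx]; exact ENNReal.zero_ne_top
  have hfin₂ : ∀ x, σ₂ {x} ≠ ⊤ := by
    intro x
    by_cases hx : x ∈ s₂
    · exact (hs₂pos x hx).2.ne
    · rw [aux_meas_notMem hrep₂ hx]; exact ENNReal.zero_ne_top
  -- key claim: the atoms of σ₁ and σ₂ agree everywhere
  have hkey : ∀ x, σ₁ {x} = σ₂ {x} := by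
    rcases Nat.eq_zero_or_pos k with hk0 | hkpos
    · -- k = 0 : both supports are empty
      have hse : s₁ ∪ s₂ = ∅ :=
        Finset.card_eq_zero.mp (Nat.le_zero.mp (hk0 ▸ hcard))
      obtain ⟨h1e, h2e⟩ := Finset.union_eq_empty.mp hse
      intro x
      rw [aux_meas_notMem hrep₁ (by simp [h1e]),
        aux_meas_notMem hrep₂ (by simp [h2e])]
    · -- find a superset `u` of `s` of cardinality `k` inside `[A,B]`
      have hssub : (↑s : Set ℝ) ⊆ Set.Icc A B := by
        rw [hsdef, Finset.coe_union]
        exact Set.union_subset hs₁sub hs₂sub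
      have hicc : (Set.Icc A B).Infinite := Set.Icc_infinite hAB
      obtain ⟨u', hsu', hu'sub, hu'card⟩ :=
        hicc.exists_superset_ncard_eq hssub s.finite_toSet (by simpa using hcard)
      have hu'fin : u'.Finite :=
        Set.finite_of_ncard_ne_zero (by rw [hu'card]; omega)
      set u : Finset ℝ := hu'fin.toFinset with hudef
      have hucoe : (↑u : Set ℝ) = u' := hu'fin.coe_toFinset
      have hucard : u.card = k := by
        rw [← hu'card, Set.ncard_eq_toFinset_card _ hu'fin]
      have hsu : s ⊆ u := fun x hx => by
        rw [← Finset.mem_coe, hucoe]; exact hsu' hx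
      set e : Fin k ↪o ℝ := u.orderEmbOfFin hucard with hedef
      have hemem : ∀ j, e j ∈ Set.Icc A B := fun j => by
        apply hu'sub; rw [← hucoe]
        exact_mod_cast u.orderEmbOfFin_mem hucard j
      -- the Chebyshev matrix at the points of `u`
      have hdet : (Matrix.of fun i j : Fin k => Ψ i (e j)).det ≠ 0 :=
        (hCheb (fun j => e j) (e.strictMono) hemem).ne'
      -- the signed weight function
      set c : ℝ → ℝ := fun x => (σ₁ {x}).toReal - (σ₂ {x}).toReal with hcdef
      have hcs : ∀ x, x ∉ s → c x = 0 := by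
        intro x hx
        rw [hsdef, Finset.mem_union] at hx
        push_neg at hx
        simp [hcdef, aux_meas_notMem hrep₁ hx.1, aux_meas_notMem hrep₂ hx.2]
      -- moment computation
      have hint₁ : ∀ i, ∫ x, Ψ i x ∂σ₁ = ∑ x ∈ s₁, (σ₁ {x}).toReal * Ψ i x := by
        intro i
        conv_lhs => rw [hrep₁]
        exact aux_integral_sum_dirac s₁ (fun x => σ₁ {x}) (fun x _ => hfin₁ x) (Ψ i)
      have hint₂ : ∀ i, ∫ x, Ψ i x ∂σ₂ = ∑ x ∈ s₂, (σ₂ {x}).toReal * Ψ i x := by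
        intro i
        conv_lhs => rw [hrep₂]
        exact aux_integral_sum_dirac s₂ (fun x => σ₂ {x}) (fun x _ => hfin₂ x) (Ψ i)
      have hzero : ∀ i, ∑ x ∈ u, c x * Ψ i x = 0 := by
        intro i
        have h1 : ∑ x ∈ u, (σ₁ {x}).toReal * Ψ i x = ∫ x, Ψ i x ∂σ₁ := by
          rw [hint₁ i]
          refine (Finset.sum_subset (Finset.subset_union_left.trans hsu)
            fun x _ hx => ?_).symm
          have : x ∉ s₁ := hx
          rw [aux_meas_notMem hrep₁ this]; simp
        have h2 : ∑ x ∈ u, (σ₂ {x}).toReal * Ψ i x = ∫ x, Ψ i x ∂σ₂ := by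
          rw [hint₂ i]
          refine (Finset.sum_subset (Finset.subset_union_right.trans hsu)
            fun x _ hx => ?_).symm
          have : x ∉ s₂ := hx
          rw [aux_meas_notMem hrep₂ this]; simp
        calc ∑ x ∈ u, c x * Ψ i x
            = ∑ x ∈ u, ((σ₁ {x}).toReal * Ψ i x - (σ₂ {x}).toReal * Ψ i x) := by
              refine Finset.sum_congr rfl fun x _ => ?_; rw [hcdef]; ring
          _ = ∑ x ∈ u, (σ₁ {x}).toReal * Ψ i x - ∑ x ∈ u, (σ₂ {x}).toReal * Ψ i x :=
              Finset.sum_sub_distrib _ _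
          _ = 0 := by rw [h1, h2, hmom i, sub_self]
      -- transport the sums to `Fin k`
      have himg : Finset.image (fun j => e j) Finset.univ = u := by
        apply Finset.coe_injective
        rw [Finset.coe_image, Finset.coe_univ, Set.image_univ]
        exact u.range_orderEmbOfFin hucard
      have hzero' : ∀ i, ∑ j : Fin k, c (e j) * Ψ i (e j) = 0 := by
        intro i
        rw [← hzero i, ← himg,
          Finset.sum_image (fun a _ b _ h => e.injective h)]
      -- linear algebra: the coefficient vector vanishes
      have hv : (fun j => c (e j)) = 0 := by
        refine Matrix.eq_zero_of_mulVec_eq_zero hdet ?_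
        funext i
        simp only [Matrix.mulVec, dotProduct, Matrix.of_apply, Pi.zero_apply]
        rw [← hzero' i]
        exact Finset.sum_congr rfl fun j _ => mul_comm _ _
      -- conclude
      intro x
      by_cases hx : x ∈ s
      · have hxu : x ∈ u := hsu hx
        have hxr : ∃ j, e j = x := by
          have : x ∈ Set.range e := by rw [u.range_orderEmbOfFin hucard]; exact_mod_cast hxu
          exact this
        obtain ⟨j, rfl⟩ := hxr
        have : c (e j) = 0 := congrFun hv j
        rw [hcdef] at this
        have htr : (σ₁ {e j}).toReal = (σ₂ {e j}).toReal := by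
          simpa [sub_eq_zero] using this
        exact (ENNReal.toReal_eq_toReal_iff' (hfin₁ _) (hfin₂ _)).mp htr
      · rw [hsdef, Finset.mem_union] at hx
        push_neg at hx
        rw [aux_meas_notMem hrep₁ hx.1, aux_meas_notMem hrep₂ hx.2]
  -- from equality of atoms to equality of measures
  have h₁s : σ₁ = ∑ x ∈ s, σ₁ {x} • Measure.dirac x :=
    hrep₁.trans (Finset.sum_subset Finset.subset_union_left fun x _ hx => by
      rw [aux_meas_notMem hrep₁ hx, zero_smul])
  have h₂s : σ₂ = ∑ x ∈ s, σ₂ {x} • Measure.dirac x :=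
    hrep₂.trans (Finset.sum_subset Finset.subset_union_right fun x _ hx => by
      rw [aux_meas_notMem hrep₂ hx, zero_smul])
  rw [h₁s, h₂s]
  exact Finset.sum_congr rfl fun x _ => by rw [hkey x]
end

section
/- Let A < B, let k = 2m be even and let Ψ₀,…,Ψ_{2m−1} : [A,B] → ℝ be a Chebyshev system. If σ₁ and σ₂ are finitely supported nonnegative measures on [A,B], each supported on exactly m+1 points including both endpoints A and B, and ∫_A^B Ψ_i dσ₁ = ∫_A^B Ψ_i dσ₂ for all i = 0,…,2m−1, then σ₁ = σ₂. (Uniqueness of the upper principal representation for even k.) -/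
open MeasureTheory Set

lemma integrable_dirac' (f : ℝ → ℝ) (a : ℝ) : Integrable f (Measure.dirac a) :=
  (integrable_const (f a)).congr (by simp [Filter.EventuallyEq, MeasureTheory.ae_dirac_eq])

lemma integral_atomic (σ : Measure ℝ) (s : Finset ℝ)
    (hrep : σ = ∑ x ∈ s, σ {x} • Measure.dirac x)
    (hfin : ∀ x ∈ s, σ {x} < ⊤) (f : ℝ → ℝ) :
    ∫ x, f x ∂σ = ∑ x ∈ s, (σ {x}).toReal * f x := by
  conv_lhs => rw [hrep]
  rw [integral_finset_sum_measure (fun x hx =>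
    (integrable_dirac' f x).smul_measure (hfin x hx).ne)]
  refine Finset.sum_congr rfl fun x hx => ?_
  rw [integral_smul_measure, integral_dirac]
  simp [mul_comm]

lemma zero_of_not_mem (σ : Measure ℝ) (s : Finset ℝ)
    (hrep : σ = ∑ x ∈ s, σ {x} • Measure.dirac x) {y : ℝ} (hy : y ∉ s) :
    σ {y} = 0 := by
  conv_lhs => rw [hrep]
  rw [Measure.finset_sum_apply]
  refine Finset.sum_eq_zero fun x hx => ?_
  have hxy : x ≠ y := fun h => hy (h ▸ hx)
  simp [Measure.dirac_apply, indicator_apply, hxy]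

/-- Uniqueness of the upper principal representation for even `k = 2m`: two finitely
supported nonnegative measures on `[A,B]`, each supported on exactly `m+1` points
including both endpoints, with equal moments w.r.t. a Chebyshev system `Ψ₀,…,Ψ_{2m-1}`,
coincide. -/
theorem upper_principal_representation_unique_even
    {m : ℕ} (A B : ℝ) (hAB : A < B) (Ψ : Fin (2 * m) → ℝ → ℝ)
    (hcont : ∀ i, ContinuousOn (Ψ i) (Set.Icc A B))
    (hCheb : IsChebyshevSystem A B Ψ)
    (σ₁ σ₂ : Measure ℝ) (s₁ s₂ : Finset ℝ)
    (h₁ : IsAtomicMeasureOn A B σ₁ s₁) (h₂ : IsAtomicMeasureOn A B σ₂ s₂)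
    (hcard₁ : s₁.card = m + 1) (hcard₂ : s₂.card = m + 1)
    (hA₁ : A ∈ s₁) (hB₁ : B ∈ s₁) (hA₂ : A ∈ s₂) (hB₂ : B ∈ s₂)
    (hmom : ∀ i, ∫ x, Ψ i x ∂σ₁ = ∫ x, Ψ i x ∂σ₂) :
    σ₁ = σ₂ := by
  obtain ⟨hs₁sub, hpos₁, hrep₁⟩ := h₁
  obtain ⟨hs₂sub, hpos₂, hrep₂⟩ := h₂
  set s : Finset ℝ := s₁ ∪ s₂ with hs
  -- card bound : s.card ≤ 2m
  have hinter : ({A, B} : Finset ℝ) ⊆ s₁ ∩ s₂ := by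
    intro x hx
    simp only [Finset.mem_insert, Finset.mem_singleton] at hx
    rcases hx with rfl | rfl <;> simp [Finset.mem_inter, *]
  have hcardAB : ({A, B} : Finset ℝ).card = 2 := by
    rw [Finset.card_insert_of_notMem (by simp [hAB.ne]), Finset.card_singleton]
  have hninter : 2 ≤ (s₁ ∩ s₂).card := hcardAB ▸ Finset.card_le_card hinter
  have hcards : s.card ≤ 2 * m := by
    have h := Finset.card_union_add_card_inter s₁ s₂
    show (s₁ ∪ s₂).card ≤ 2 * m
    omega
  -- extend s to a set u of exactly 2m points in [A,B]
  have hIccInf : (Set.Icc A B \ ↑s).Infinite :=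
    (Set.Icc_infinite hAB).diff s.finite_toSet
  obtain ⟨t, htsub, htcard⟩ := hIccInf.exists_subset_card_eq (2 * m - s.card)
  have hdisj : Disjoint s t := by
    rw [Finset.disjoint_right]
    intro x hxt hxs
    exact ((htsub hxt).2 hxs).elim
  set u : Finset ℝ := s ∪ t with hu
  have hucard : u.card = 2 * m := by
    rw [hu, Finset.card_union_of_disjoint hdisj, htcard]; omega
  have husub : ↑u ⊆ Set.Icc A B := by
    intro x hx
    rw [hu] at hx
    simp only [Finset.coe_union, Set.mem_union] at hx
    rcases hx with hx | hx
    · rcases Finset.mem_union.mp hx with h | h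
      · exact hs₁sub h
      · exact hs₂sub h
    · exact (htsub hx).1
  -- the sorted enumeration of u
  set e := u.orderIsoOfFin hucard with he
  have hmono : StrictMono fun j => (e j : ℝ) := fun i j hij => by
    exact_mod_cast e.strictMono hij
  have hmem : ∀ j, (e j : ℝ) ∈ Set.Icc A B := fun j => husub (e j).2
  -- coefficients
  set a : ℝ → ℝ := fun x => (σ₁ {x}).toReal with ha
  set b : ℝ → ℝ := fun x => (σ₂ {x}).toReal with hb
  have ha0 : ∀ x ∉ s₁, a x = 0 := fun x hx => by
    simp [ha, zero_of_not_mem σ₁ s₁ hrep₁ hx]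
  have hb0 : ∀ x ∉ s₂, b x = 0 := fun x hx => by
    simp [hb, zero_of_not_mem σ₂ s₂ hrep₂ hx]
  -- moment sums over u
  have hmomsum : ∀ i, ∑ x ∈ u, (a x - b x) * Ψ i x = 0 := by
    intro i
    have e1 : ∫ x, Ψ i x ∂σ₁ = ∑ x ∈ s₁, a x * Ψ i x :=
      integral_atomic σ₁ s₁ hrep₁ (fun x hx => (hpos₁ x hx).2) _
    have e2 : ∫ x, Ψ i x ∂σ₂ = ∑ x ∈ s₂, b x * Ψ i x :=
      integral_atomic σ₂ s₂ hrep₂ (fun x hx => (hpos₂ x hx).2) _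
    have hsub1 : s₁ ⊆ u := fun x hx =>
      Finset.mem_union_left _ (Finset.mem_union_left _ hx)
    have hsub2 : s₂ ⊆ u := fun x hx =>
      Finset.mem_union_left _ (Finset.mem_union_right _ hx)
    have e1' : ∑ x ∈ u, a x * Ψ i x = ∑ x ∈ s₁, a x * Ψ i x := by
      refine (Finset.sum_subset hsub1 ?_).symm
      intro x _ hx
      rw [ha0 x hx, zero_mul]
    have e2' : ∑ x ∈ u, b x * Ψ i x = ∑ x ∈ s₂, b x * Ψ i x := by
      refine (Finset.sum_subset hsub2 ?_).symm
      intro x _ hx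
      rw [hb0 x hx, zero_mul]
    have := hmom i
    rw [e1, e2, ← e1', ← e2'] at this
    simp only [sub_mul]
    rw [Finset.sum_sub_distrib, this, sub_self]
  -- matrix argument
  have hdet : ((Matrix.of fun i j : Fin (2 * m) => Ψ i (e j)).det) ≠ 0 :=
    (hCheb _ hmono hmem).ne'
  set v : Fin (2 * m) → ℝ := fun j => a (e j) - b (e j) with hv
  have hmv : (Matrix.of fun i j : Fin (2 * m) => Ψ i (e j)).mulVec v = 0 := by
    funext i
    simp only [Matrix.mulVec, dotProduct, Matrix.of_apply]
    have := hmomsum i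
    rw [← Finset.sum_coe_sort u (fun x => (a x - b x) * Ψ i x)] at this
    rw [← Equiv.sum_comp e.toEquiv (fun y : {x // x ∈ u} => (a (y:ℝ) - b (y:ℝ)) * Ψ i (y:ℝ))] at this
    simpa [hv, mul_comm] using this
  have hv0 : v = 0 := Matrix.eq_zero_of_mulVec_eq_zero hdet hmv
  -- so a = b on u
  have hab : ∀ x ∈ u, a x = b x := by
    intro x hx
    have h0 : a x - b x = 0 := by
      have h0 := congrFun hv0 (e.symm ⟨x, hx⟩)
      simpa [hv] using h0
    exact sub_eq_zero.mp h0
  -- measure equality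
  have hmeas : ∀ x ∈ s, σ₁ {x} = σ₂ {x} := by
    intro x hx
    have hxu : x ∈ u := Finset.mem_union_left _ hx
    have h1ne : σ₁ {x} ≠ ⊤ := by
      by_cases hx1 : x ∈ s₁
      · exact (hpos₁ x hx1).2.ne
      · simp [zero_of_not_mem σ₁ s₁ hrep₁ hx1]
    have h2ne : σ₂ {x} ≠ ⊤ := by
      by_cases hx2 : x ∈ s₂
      · exact (hpos₂ x hx2).2.ne
      · simp [zero_of_not_mem σ₂ s₂ hrep₂ hx2]
    exact (ENNReal.toReal_eq_toReal_iff' h1ne h2ne).mp (hab x hxu)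
  -- rewrite both measures as sums over s
  have hrep₁' : σ₁ = ∑ x ∈ s, σ₁ {x} • Measure.dirac x := by
    refine hrep₁.trans (Finset.sum_subset Finset.subset_union_left fun x _ hx => ?_)
    rw [zero_of_not_mem σ₁ s₁ hrep₁ hx, zero_smul]
  have hrep₂' : σ₂ = ∑ x ∈ s, σ₂ {x} • Measure.dirac x := by
    refine hrep₂.trans (Finset.sum_subset Finset.subset_union_right fun x _ hx => ?_)
    rw [zero_of_not_mem σ₂ s₂ hrep₂ hx, zero_smul]
  rw [hrep₁', hrep₂']
  exact Finset.sum_congr rfl fun x hx => by rw [hmeas x hx]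
end

section
/- Let A < B, let k = 2m−1 be odd and let Ψ₀,…,Ψ_{2m−2} : [A,B] → ℝ be a Chebyshev system. If σ₁ and σ₂ are finitely supported nonnegative measures on [A,B], each supported on exactly m points including the endpoint B but not A, and ∫_A^B Ψ_i dσ₁ = ∫_A^B Ψ_i dσ₂ for all i = 0,…,2m−2, then σ₁ = σ₂. (Uniqueness of the upper principal representation for odd k.) -/
open MeasureTheory Set

/-- An atomic measure vanishes on singletons outside its support. -/
lemma IsAtomicMeasureOn.apply_eq_zero {A B : ℝ} {σ : Measure ℝ} {s : Finset ℝ}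
    (h : IsAtomicMeasureOn A B σ s) {y : ℝ} (hy : y ∉ s) : σ {y} = 0 := by
  obtain ⟨-, -, hrep⟩ := h
  conv_lhs => rw [hrep]
  rw [Measure.finset_sum_apply]
  refine Finset.sum_eq_zero fun x hx => ?_
  rw [Measure.smul_apply, Measure.dirac_apply' _ (measurableSet_singleton y),
    Set.indicator_of_notMem (by rintro (rfl : x = y); exact hy hx)]
  simp

/-- Singleton values of an atomic measure are finite. -/
lemma IsAtomicMeasureOn.apply_ne_top {A B : ℝ} {σ : Measure ℝ} {s : Finset ℝ}
    (h : IsAtomicMeasureOn A B σ s) (y : ℝ) : σ {y} ≠ ⊤ := by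
  by_cases hy : y ∈ s
  · exact (h.2.1 y hy).2.ne
  · simp [h.apply_eq_zero hy]

/-- Integral against an atomic measure is a finite weighted sum. -/
lemma IsAtomicMeasureOn.integral_eq {A B : ℝ} {σ : Measure ℝ} {s : Finset ℝ}
    (h : IsAtomicMeasureOn A B σ s) (f : ℝ → ℝ) :
    ∫ x, f x ∂σ = ∑ x ∈ s, (σ {x}).toReal * f x := by
  obtain ⟨-, hpos, hrep⟩ := h
  have hint : ∀ x ∈ s, Integrable f (σ {x} • Measure.dirac x) := by
    intro x hx
    refine Integrable.smul_measure ?_ (hpos x hx).2.ne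
    refine (integrable_const (f x)).congr ?_
    rw [MeasureTheory.ae_dirac_eq]
    exact Filter.eventually_pure.2 rfl
  conv_lhs => rw [hrep]
  rw [integral_finset_sum_measure hint]
  refine Finset.sum_congr rfl fun x hx => ?_
  rw [integral_smul_measure, integral_dirac, smul_eq_mul]

/-- Uniqueness of the upper principal representation for odd `k = 2m - 1`: two finitely
supported nonnegative measures on `[A,B]`, each supported on exactly `m` points
including `B` but not `A`, with equal moments w.r.t. a Chebyshev system
`Ψ₀,…,Ψ_{2m-2}`, coincide. -/
theorem upper_principal_representation_unique_odd
    {m : ℕ} (hm : 1 ≤ m) (A B : ℝ) (hAB : A < B) (Ψ : Fin (2 * m - 1) → ℝ → ℝ)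
    (hcont : ∀ i, ContinuousOn (Ψ i) (Set.Icc A B))
    (hCheb : IsChebyshevSystem A B Ψ)
    (σ₁ σ₂ : Measure ℝ) (s₁ s₂ : Finset ℝ)
    (h₁ : IsAtomicMeasureOn A B σ₁ s₁) (h₂ : IsAtomicMeasureOn A B σ₂ s₂)
    (hcard₁ : s₁.card = m) (hcard₂ : s₂.card = m)
    (hB₁ : B ∈ s₁) (hA₁ : A ∉ s₁) (hB₂ : B ∈ s₂) (hA₂ : A ∉ s₂)
    (hmom : ∀ i, ∫ x, Ψ i x ∂σ₁ = ∫ x, Ψ i x ∂σ₂) :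
    σ₁ = σ₂ := by
  classical
  set s : Finset ℝ := s₁ ∪ s₂ with hs
  -- the union has at most 2m-1 points since B is common
  have hcards : s.card ≤ 2 * m - 1 := by
    have h1 : s.card + (s₁ ∩ s₂).card = s₁.card + s₂.card := by
      rw [hs]; exact Finset.card_union_add_card_inter s₁ s₂
    have h2 : 1 ≤ (s₁ ∩ s₂).card :=
      Finset.card_pos.2 ⟨B, Finset.mem_inter.2 ⟨hB₁, hB₂⟩⟩
    omega
  have hssub : (↑s : Set ℝ) ⊆ Set.Icc A B := by
    rw [hs, Finset.coe_union]
    exact Set.union_subset h₁.1 h₂.1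
  -- extend the union to exactly 2m-1 points in [A,B]
  have hinf : (Set.Icc A B \ ↑s).Infinite :=
    (Set.Icc_infinite hAB).diff (s.finite_toSet)
  obtain ⟨t, htsub, htcard⟩ := hinf.exists_subset_card_eq (2 * m - 1 - s.card)
  have hdisj : Disjoint s t := by
    rw [Finset.disjoint_left]
    intro a has hat
    exact (htsub hat).2 has
  set u : Finset ℝ := s ∪ t with hu
  have hucard : u.card = 2 * m - 1 := by
    rw [hu, Finset.card_union_of_disjoint hdisj, htcard]
    omega
  have husub : (↑u : Set ℝ) ⊆ Set.Icc A B := by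
    rw [hu, Finset.coe_union]
    exact Set.union_subset hssub (htsub.trans Set.diff_subset)
  set x : Fin (2 * m - 1) → ℝ := ⇑(u.orderEmbOfFin hucard) with hx
  have hxmono : StrictMono x := (u.orderEmbOfFin hucard).strictMono
  have hxmem : ∀ j, x j ∈ Set.Icc A B := fun j => husub (u.orderEmbOfFin_mem hucard j)
  have hdet := hCheb x hxmono hxmem
  -- moments over u
  have hmomu : ∀ i, ∑ y ∈ u, ((σ₁ {y}).toReal - (σ₂ {y}).toReal) * Ψ i y = 0 := by
    intro i
    have e₁ : ∑ y ∈ s₁, (σ₁ {y}).toReal * Ψ i y = ∑ y ∈ u, (σ₁ {y}).toReal * Ψ i y := by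
      refine Finset.sum_subset (Finset.subset_union_left.trans
        (subset_trans Finset.subset_union_left subset_rfl)) ?_
      intro y hyu hys
      rw [h₁.apply_eq_zero hys]
      simp
    have e₂ : ∑ y ∈ s₂, (σ₂ {y}).toReal * Ψ i y = ∑ y ∈ u, (σ₂ {y}).toReal * Ψ i y := by
      refine Finset.sum_subset (Finset.subset_union_right.trans Finset.subset_union_left) ?_
      intro y hyu hys
      rw [h₂.apply_eq_zero hys]
      simp
    have hmi := hmom i
    rw [h₁.integral_eq, h₂.integral_eq, e₁, e₂] at hmi
    simp only [sub_mul, Finset.sum_sub_distrib, hmi, sub_self]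
  -- the weight differences vanish
  have hv : ∀ j : Fin (2 * m - 1), (σ₁ {x j}).toReal - (σ₂ {x j}).toReal = 0 := by
    set M : Matrix (Fin (2 * m - 1)) (Fin (2 * m - 1)) ℝ :=
      Matrix.of fun i j => Ψ i (x j) with hM
    set v : Fin (2 * m - 1) → ℝ :=
      fun j => (σ₁ {x j}).toReal - (σ₂ {x j}).toReal with hvdef
    have hMv : M.mulVec v = 0 := by
      funext i
      have hre : dotProduct (fun j => Ψ i (x j)) v
          = ∑ y ∈ u, ((σ₁ {y}).toReal - (σ₂ {y}).toReal) * Ψ i y := by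
        rw [dotProduct]
        refine Finset.sum_bij (fun j _ => x j) (fun j _ => u.orderEmbOfFin_mem hucard j)
          (fun a _ b _ h => hxmono.injective h) (fun b hb => ?_)
          (fun j _ => by simp only [hvdef]; ring)
        have hbr : b ∈ Set.range x := by
          rw [hx, Finset.range_orderEmbOfFin]; exact hb
        obtain ⟨j, rfl⟩ := hbr
        exact ⟨j, Finset.mem_univ j, rfl⟩
      simp only [Matrix.mulVec, hM, Matrix.of_apply, Pi.zero_apply]
      rw [hre, hmomu i]
    have := Matrix.eq_zero_of_mulVec_eq_zero hdet.ne' hMv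
    intro j
    exact congrFun this j
  -- equal singleton masses on the union
  have heq : ∀ y ∈ s, σ₁ {y} = σ₂ {y} := by
    intro y hy
    have hyu : y ∈ u := Finset.mem_union_left _ hy
    have : y ∈ Set.range x := by
      rw [hx, Finset.range_orderEmbOfFin]
      exact hyu
    obtain ⟨j, rfl⟩ := this
    have h0 := hv j
    have htr : (σ₁ {x j}).toReal = (σ₂ {x j}).toReal := by linarith
    exact (ENNReal.toReal_eq_toReal_iff' (h₁.apply_ne_top _) (h₂.apply_ne_top _)).1 htr
  -- the supports coincide
  have hseq : s₁ = s₂ := by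
    ext y
    constructor
    · intro hy
      by_contra hy2
      have := heq y (Finset.mem_union_left _ hy)
      rw [h₂.apply_eq_zero hy2] at this
      exact ((h₁.2.1 y hy).1.ne' this).elim
    · intro hy
      by_contra hy1
      have := heq y (Finset.mem_union_right _ hy)
      rw [h₁.apply_eq_zero hy1] at this
      exact ((h₂.2.1 y hy).1.ne this).elim
  -- conclude
  rw [h₁.2.2, h₂.2.2, ← hseq]
  refine Finset.sum_congr rfl fun y hy => ?_
  rw [heq y (Finset.mem_union_left _ hy)]
end

section
/- Let A < B, let Ψ₀,…,Ψ_{k−1} : [A,B] → ℝ be continuous functions forming a Chebyshev system, and let Ω : [A,B] → ℝ be continuous. Fix c⁰ ∈ ℝ^k such that the set S = { σ : σ finite nonnegative Borel measure on [A,B] with ∫_A^B Ψ_i dσ = c⁰_i for i = 0,…,k−1 } is nonempty. Then the set { ∫_A^B Ω dσ : σ ∈ S } ⊆ ℝ is a nonempty compact interval, i.e., of the form [γ⁻, γ⁺] for some real numbers γ⁻ ≤ γ⁺. -/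
open MeasureTheory Set

/-- `σ` belongs to the feasible set `S`: it is a finite nonnegative Borel measure
living on `[A,B]` whose moments with respect to `Ψ₀,…,Ψ_{k-1}` are `c₀,…,c_{k-1}`. -/
def IsFeasible (A B : ℝ) {k : ℕ} (Ψ : Fin k → ℝ → ℝ) (c : Fin k → ℝ)
    (σ : Measure ℝ) : Prop :=
  IsFiniteMeasure σ ∧ σ (Set.Icc A B)ᶜ = 0 ∧ ∀ i, ∫ x, Ψ i x ∂σ = c i

set_option linter.unnecessarySimpa false

private lemma aux_weights_eq_zero {k : ℕ} (hk : 0 < k) {A B : ℝ} {Ψ : Fin k → ℝ → ℝ}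
    (hCheb : IsChebyshevSystem A B Ψ) {x : Fin (k+1) → ℝ} (hx : StrictMono x)
    (hxI : ∀ j, x j ∈ Set.Icc A B) {w : Fin (k+1) → ℝ} (hw : ∀ j, 0 ≤ w j)
    (hsum : ∀ i, ∑ j, w j * Ψ i (x j) = 0) : ∀ j, w j = 0 := by
  set b0 : Fin k := ⟨0, hk⟩ with hb0
  set M : Matrix (Fin k) (Fin k) ℝ := Matrix.of fun a b => Ψ a (x b.succ) with hM
  have hdetM : 0 < M.det :=
    hCheb _ (hx.comp fun a b h => Fin.succ_lt_succ_iff.2 h) fun j => hxI _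
  set v0 : Fin k → ℝ := fun a => Ψ a (x 0) with hv0
  set w' : Fin k → ℝ := fun b => w b.succ with hw'
  have hMv : M.mulVec w' = (-(w 0)) • v0 := by
    funext a
    have h := hsum a
    rw [Fin.sum_univ_succ] at h
    simp only [Matrix.mulVec, dotProduct, hM, Matrix.of_apply, hw', Pi.smul_apply, hv0,
      smul_eq_mul]
    have : ∑ b : Fin k, Ψ a (x b.succ) * w b.succ = ∑ b : Fin k, w b.succ * Ψ a (x b.succ) := by
      simp [mul_comm]
    rw [this]
    linarith
  have hadj : ∀ u : Fin k → ℝ, M.adjugate.mulVec (M.mulVec u) = M.det • u := by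
    intro u
    rw [Matrix.mulVec_mulVec, Matrix.adjugate_mul, Matrix.smul_mulVec, Matrix.one_mulVec]
  set p1 : Fin (k+1) := ⟨1, by omega⟩ with hp1
  set z : Fin k → ℝ := fun b => x (p1.succAbove b) with hz0
  have hzmono : StrictMono z := hx.comp (Fin.strictMono_succAbove p1)
  have hdetN : 0 < (Matrix.of fun a b => Ψ a (z b)).det := hCheb _ hzmono fun j => hxI _
  have hupd : M.updateCol b0 v0 = Matrix.of fun a b => Ψ a (z b) := by
    funext a b
    rw [Matrix.updateCol_apply]
    by_cases hb : b = b0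
    · subst hb
      have h0 : p1.succAbove b0 = 0 := by
        simp [Fin.succAbove, hp1, hb0]
      simp [hz0, h0, hv0, hM]
    · have h1 : p1.succAbove b = b.succ := by
        have : ¬ (b.castSucc < p1) := by
          simp only [hp1, Fin.lt_def, Fin.coe_castSucc]
          have : b.val ≠ 0 := fun hc => hb (Fin.ext (by simpa [hb0] using hc))
          omega
        simp [Fin.succAbove, this]
      simp [hz0, h1, hM, if_neg hb]
  -- Cramer computation at column b0
  have hcr : M.det * w' b0 = (-(w 0)) * (M.updateCol b0 v0).det := by
    have h := congrFun (hadj w') b0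
    rw [hMv, ← Matrix.cramer_eq_adjugate_mulVec, _root_.map_smul] at h
    rw [Pi.smul_apply, Pi.smul_apply, smul_eq_mul, smul_eq_mul, Matrix.cramer_apply] at h
    linarith
  have hNpos : 0 < (M.updateCol b0 v0).det := by rw [hupd]; exact hdetN
  have hw'0 : 0 ≤ w' b0 := hw _
  have hw00 : 0 ≤ w 0 := hw _
  have hw0 : w 0 = 0 := by nlinarith
  have hMv0 : M.mulVec w' = 0 := by rw [hMv, hw0]; simp
  have hdw : M.det • w' = 0 := by rw [← hadj w', hMv0, Matrix.mulVec_zero]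
  have hw'z : w' = 0 := by
    rcases smul_eq_zero.1 hdw with h | h
    · exact absurd h (ne_of_gt hdetM)
    · exact h
  intro j
  refine Fin.cases ?_ (fun b => ?_) j
  · exact hw0
  · exact congrFun hw'z b

private lemma aux_zero_not_mem {k : ℕ} (hk : 0 < k) {A B : ℝ} (hAB : A < B) {Ψ : Fin k → ℝ → ℝ}
    (hCheb : IsChebyshevSystem A B Ψ) :
    (0 : Fin k → ℝ) ∉ convexHull ℝ ((fun t => fun i => Ψ i t) '' Set.Icc A B) := by
  classical
  intro h0
  obtain ⟨ι, hfin, z, w, hz, hai, hwpos, hw1, hzero⟩ :=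
    eq_pos_convex_span_of_mem_convexHull h0
  letI := hfin
  have hw1' : ∑ i : ι, w i = 1 := hw1
  have hzero' : ∑ i : ι, w i • z i = 0 := hzero
  clear hw1 hzero
  have hne : Nonempty ι := by
    by_contra h
    rw [not_nonempty_iff] at h
    haveI := h
    simpa using hw1'
  have hcard : Fintype.card ι ≤ k + 1 := by
    have h1 := hai.card_le_finrank_succ
    have h2 : Module.finrank ℝ (vectorSpan ℝ (Set.range z)) ≤ Module.finrank ℝ (Fin k → ℝ) :=
      Submodule.finrank_le _
    rw [Module.finrank_fin_fun] at h2
    exact h1.trans (Nat.add_le_add_right h2 1)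
  choose ξ hξI hξ using fun i => hz (Set.mem_range_self i)
  set X : Finset ℝ := Finset.image ξ Finset.univ with hX
  have hXcard : X.card ≤ k + 1 := le_trans Finset.card_image_le (by simpa using hcard)
  have hXsub : ↑X ⊆ Set.Icc A B := by
    intro t ht
    simp only [hX, Finset.coe_image, Set.mem_image, Finset.coe_univ, Set.mem_univ] at ht
    obtain ⟨i, -, rfl⟩ := ht
    exact hξI i
  obtain ⟨s', hXs', hs'I, hs'card⟩ :=
    Set.Infinite.exists_superset_ncard_eq (Set.Icc_infinite hAB) hXsub X.finite_toSet
      (show (↑X : Set ℝ).ncard ≤ k + 1 by rwa [Set.ncard_coe_finset])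
  have hs'fin : s'.Finite := Set.finite_of_ncard_ne_zero (by omega)
  set Z : Finset ℝ := hs'fin.toFinset with hZ
  have hZcard : Z.card = k + 1 := by
    rw [hZ, ← Set.ncard_eq_toFinset_card _ hs'fin]; exact hs'card
  set y := Z.orderEmbOfFin hZcard with hy
  have hymem : ∀ b, y b ∈ Set.Icc A B := fun b => by
    apply hs'I
    have := Finset.orderEmbOfFin_mem Z hZcard b
    simpa [hZ, hs'fin.mem_toFinset] using this
  have hgex : ∀ i : ι, ∃ b, y b = ξ i := by
    intro i
    have hmem : ξ i ∈ Z := by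
      rw [hZ, hs'fin.mem_toFinset]
      exact hXs' (by simp [hX])
    have : (ξ i : ℝ) ∈ Set.range y := by
      rw [hy, Finset.range_orderEmbOfFin]
      exact_mod_cast hmem
    exact this
  choose g hgy using hgex
  set W : Fin (k+1) → ℝ := fun b => ∑ i ∈ Finset.univ.filter (fun i => g i = b), w i with hW
  have hWnn : ∀ b, 0 ≤ W b := fun b => Finset.sum_nonneg fun i _ => (hwpos i).le
  have hfib : ∀ (F : ι → ℝ), ∑ b : Fin (k+1), ∑ i ∈ Finset.univ.filter (fun i => g i = b), F i
      = ∑ i, F i := fun F => Finset.sum_fiberwise Finset.univ g F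
  have hWsum : ∀ a : Fin k, ∑ b, W b * Ψ a (y b) = 0 := by
    intro a
    have step1 : ∀ b : Fin (k+1), W b * Ψ a (y b)
        = ∑ i ∈ Finset.univ.filter (fun i => g i = b), w i * Ψ a (y (g i)) := by
      intro b
      rw [hW, Finset.sum_mul]
      refine Finset.sum_congr rfl fun i hi => ?_
      rw [(Finset.mem_filter.1 hi).2]
    rw [Finset.sum_congr rfl fun b _ => step1 b, hfib]
    have : ∀ i, w i * Ψ a (y (g i)) = w i * Ψ a (ξ i) := fun i => by rw [hgy]
    rw [Finset.sum_congr rfl fun i _ => this i]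
    have happ := congrFun hzero' a
    rw [Finset.sum_apply] at happ
    simp only [Pi.zero_apply] at happ
    rw [← happ]
    refine Finset.sum_congr rfl fun i _ => ?_
    simp only [Pi.smul_apply, smul_eq_mul]
    have hxi : Ψ a (ξ i) = z i a := by simpa using congrFun (hξ i) a
    rw [hxi]
  have hWzero := aux_weights_eq_zero hk hCheb (y.strictMono) hymem hWnn hWsum
  have : (1 : ℝ) = 0 := by
    rw [← hw1', ← hfib w]
    simp only [← hW]
    simp [hWzero]
  norm_num at this

private lemma aux_dite_sum {γ : Type*} [AddCommMonoid γ] {m n : ℕ} (hmn : m ≤ n) (G : Fin m → γ) :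
    (∑ b : Fin n, if h : (b : ℕ) < m then G ⟨b, h⟩ else 0) = ∑ j, G j := by
  have h1 : ∀ b : Fin n, b ∉ Finset.univ.map (Fin.castLEEmb hmn) →
      (if h : (b : ℕ) < m then G ⟨b, h⟩ else 0) = 0 := by
    intro b hb
    rw [dif_neg]
    intro hlt
    exact hb (Finset.mem_map.2 ⟨⟨b, hlt⟩, Finset.mem_univ _, Fin.ext rfl⟩)
  rw [← Finset.sum_subset (Finset.subset_univ _) (fun b _ hb => h1 b hb), Finset.sum_map]
  refine Finset.sum_congr rfl fun j _ => ?_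
  rw [dif_pos (by simpa using j.isLt)]
  congr 1

private lemma aux_isCompact_convexHull {E : Type*} [NormedAddCommGroup E] [NormedSpace ℝ E]
    [FiniteDimensional ℝ E] {s : Set E} (hs : IsCompact s) :
    IsCompact (convexHull ℝ s) := by
  classical
  rcases s.eq_empty_or_nonempty with rfl | hne
  · simpa using isCompact_empty
  set n := Module.finrank ℝ E + 1 with hn
  set f : (Fin n → ℝ) × (Fin n → E) → E := fun p => ∑ b, p.1 b • p.2 b with hf
  have hfc : Continuous f := continuous_finset_sum _ fun b _ =>
    ((continuous_apply b).comp continuous_fst).smul ((continuous_apply b).comp continuous_snd)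
  have hK : IsCompact ((stdSimplex ℝ (Fin n)) ×ˢ (Set.univ.pi fun _ : Fin n => s)) :=
    (isCompact_stdSimplex ℝ _).prod (isCompact_univ_pi fun _ => hs)
  have himg : f '' ((stdSimplex ℝ (Fin n)) ×ˢ (Set.univ.pi fun _ : Fin n => s))
      = convexHull ℝ s := by
    apply Set.Subset.antisymm
    · rintro - ⟨⟨u, q⟩, ⟨⟨hu0, hu1⟩, hq⟩, rfl⟩
      have := Finset.centerMass_mem_convexHull (t := Finset.univ) (w := u) (z := q)
        (fun b _ => hu0 b) (by rw [hu1]; norm_num) (fun b _ => hq b (Set.mem_univ b))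
      rwa [Finset.centerMass_eq_of_sum_1 _ _ hu1] at this
    · intro v hv
      obtain ⟨ι, hι, z, w, hzs, hai, hpos, hsum1, hsumx⟩ :=
        eq_pos_convex_span_of_mem_convexHull hv
      letI := hι
      have hne' : Nonempty ι := by
        by_contra h
        rw [not_nonempty_iff] at h
        haveI := h
        simpa using hsum1
      have hm0 : 0 < Fintype.card ι := Fintype.card_pos
      have hcard : Fintype.card ι ≤ n := by
        have h2 : Module.finrank ℝ (vectorSpan ℝ (Set.range z)) ≤ Module.finrank ℝ E :=
          Submodule.finrank_le _
        exact hai.card_le_finrank_succ.trans (Nat.add_le_add_right h2 1)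
      set m := Fintype.card ι with hm
      set e := Fintype.equivFin ι with he
      set u : Fin n → ℝ := fun b => if h : (b : ℕ) < m then w (e.symm ⟨b, h⟩) else 0 with hu
      set q : Fin n → E := fun b =>
        if h : (b : ℕ) < m then z (e.symm ⟨b, h⟩) else z (e.symm ⟨0, hm0⟩) with hq
      refine ⟨(u, q), ⟨⟨fun b => ?_, ?_⟩, fun b _ => ?_⟩, ?_⟩
      · rw [hu]
        dsimp only
        split
        · exact (hpos _).le
        · exact le_rfl
      · rw [hu]
        dsimp only
        rw [aux_dite_sum hcard (fun j => w (e.symm j)), Equiv.sum_comp e.symm w]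
        exact hsum1
      · rw [hq]
        dsimp only
        split
        · exact hzs ⟨_, rfl⟩
        · exact hzs ⟨_, rfl⟩
      · rw [hf]
        dsimp only
        have hterm : ∀ b : Fin n, u b • q b
            = if h : (b : ℕ) < m then (fun i => w i • z i) (e.symm ⟨b, h⟩) else 0 := by
          intro b
          rw [hu, hq]
          dsimp only
          by_cases h : (b : ℕ) < m
          · rw [dif_pos h, dif_pos h, dif_pos h]
          · rw [dif_neg h, dif_neg h, dif_neg h, zero_smul]
        rw [Finset.sum_congr rfl fun b _ => hterm b,
          aux_dite_sum hcard (fun j => w (e.symm j) • z (e.symm j)),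
          Equiv.sum_comp e.symm (fun i => w i • z i)]
        exact hsumx
  rw [← himg]
  exact hK.image hfc

/-- If `{Ψ₀,…,Ψ_{k-1}}` is a Chebyshev system on `[A,B]` and the feasible set of measures
with prescribed `Ψ`-moments `c⁰` is nonempty, then the set of values `∫ Ω dσ` over the
feasible set is a nonempty compact interval `[γ⁻, γ⁺]`. -/
theorem moment_range_is_compact_interval
    {k : ℕ} (hk : 0 < k) (A B : ℝ) (hAB : A < B)
    (Ψ : Fin k → ℝ → ℝ) (Ω : ℝ → ℝ)
    (hcontΨ : ∀ i, ContinuousOn (Ψ i) (Set.Icc A B))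
    (hcontΩ : ContinuousOn Ω (Set.Icc A B))
    (hCheb : IsChebyshevSystem A B Ψ)
    (c : Fin k → ℝ)
    (hS : ∃ σ : Measure ℝ, IsFeasible A B Ψ c σ) :
    ∃ γm γp : ℝ, γm ≤ γp ∧
      {y : ℝ | ∃ σ : Measure ℝ, IsFeasible A B Ψ c σ ∧ ∫ x, Ω x ∂σ = y} =
        Set.Icc γm γp := by
  classical
  obtain ⟨σ₀, hσ₀⟩ := hS
  set φ : ℝ → (Fin k → ℝ) × ℝ := fun t => (fun i => Ψ i t, Ω t) with hφ
  have hφcont : ContinuousOn φ (Set.Icc A B) :=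
    ContinuousOn.prodMk (continuousOn_pi.2 fun i => hcontΨ i) hcontΩ
  set C : Set ((Fin k → ℝ) × ℝ) := convexHull ℝ (φ '' Set.Icc A B) with hC
  have hCcomp : IsCompact C :=
    aux_isCompact_convexHull (isCompact_Icc.image_of_continuousOn hφcont)
  have hCne : (φ A) ∈ C := subset_convexHull ℝ _ ⟨A, ⟨le_refl A, hAB.le⟩, rfl⟩
  -- Direction 1 : every feasible measure gives a point of the cone slice
  have dir1 : ∀ σ : Measure ℝ, IsFeasible A B Ψ c σ →
      ∃ t : ℝ, 0 ≤ t ∧ ∃ v ∈ C, t • v = (c, ∫ x, Ω x ∂σ) := by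
    rintro σ ⟨hfin, hnull, hmom⟩
    haveI := hfin
    have hae : ∀ᵐ t ∂σ, t ∈ Set.Icc A B := by
      rw [MeasureTheory.ae_iff]
      exact hnull
    have hres : σ.restrict (Set.Icc A B) = σ := Measure.restrict_eq_self_of_ae_mem hae
    have hintφ : Integrable φ σ := by
      rw [← hres]
      exact hφcont.integrableOn_compact isCompact_Icc
    by_cases hzero : σ = 0
    · refine ⟨0, le_rfl, φ A, hCne, ?_⟩
      have hc0 : c = 0 := by
        funext i
        rw [Pi.zero_apply, ← hmom i, hzero, integral_zero_measure]
      rw [zero_smul, hzero, integral_zero_measure, hc0]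
      rfl
    · have hμu : σ Set.univ ≠ 0 := by
        simpa [Measure.measure_univ_eq_zero] using hzero
      have hμt : σ Set.univ ≠ ⊤ := measure_ne_top σ _
      set m : ℝ := (σ Set.univ).toReal with hmdef
      have hm : 0 < m := ENNReal.toReal_pos hμu hμt
      set p : Measure ℝ := (σ Set.univ)⁻¹ • σ with hp
      haveI : IsProbabilityMeasure p := ⟨by
        rw [hp, Measure.smul_apply, smul_eq_mul, ENNReal.inv_mul_cancel hμu hμt]⟩
      have hintp : Integrable φ p := by
        rw [hp]
        exact hintφ.smul_measure (ENNReal.inv_ne_top.2 hμu)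
      have haep : ∀ᵐ t ∂p, φ t ∈ C := by
        have hsub : {t : ℝ | ¬ φ t ∈ C} ⊆ (Set.Icc A B)ᶜ := by
          intro t ht
          simp only [Set.mem_compl_iff]
          intro htI
          exact ht (subset_convexHull ℝ _ ⟨t, htI, rfl⟩)
        rw [MeasureTheory.ae_iff]
        refine measure_mono_null hsub ?_
        rw [hp, Measure.smul_apply, hnull, smul_eq_mul, mul_zero]
      have hvC : (∫ t, φ t ∂p) ∈ C :=
        (convex_convexHull ℝ _).integral_mem hCcomp.isClosed haep hintp
      refine ⟨m, hm.le, _, hvC, ?_⟩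
      have hip : ∫ t, φ t ∂p = m⁻¹ • ∫ t, φ t ∂σ := by
        rw [hp, integral_smul_measure, ENNReal.toReal_inv]
      have h1 : (∫ t, φ t ∂σ).1 = c := by
        funext i
        have hL := ContinuousLinearMap.integral_comp_comm
          ((ContinuousLinearMap.proj i).comp
            (ContinuousLinearMap.fst ℝ (Fin k → ℝ) ℝ)) hintφ
        have hL' : ∫ t, Ψ i t ∂σ = (∫ t, φ t ∂σ).1 i := by simpa using hL
        rw [← hL', hmom i]
      have h2 : (∫ t, φ t ∂σ).2 = ∫ x, Ω x ∂σ := by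
        have hL := ContinuousLinearMap.integral_comp_comm
          (ContinuousLinearMap.snd ℝ (Fin k → ℝ) ℝ) hintφ
        have hL' : ∫ t, Ω t ∂σ = (∫ t, φ t ∂σ).2 := by simpa using hL
        rw [← hL']
      have hiσ : ∫ t, φ t ∂σ = (c, ∫ x, Ω x ∂σ) := Prod.ext h1 h2
      rw [hip, hiσ, smul_smul, mul_inv_cancel₀ hm.ne', one_smul]
  -- Direction 2 : every point of the cone slice comes from a feasible measure
  have dir2 : ∀ (y t : ℝ), 0 ≤ t → ∀ v ∈ C, t • v = (c, y) →
      ∃ σ : Measure ℝ, IsFeasible A B Ψ c σ ∧ ∫ x, Ω x ∂σ = y := by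
    intro y t ht v hv htv
    obtain ⟨ι, hι, z, w, hzs, hai, hpos, hsum1, hsumx⟩ :=
      eq_pos_convex_span_of_mem_convexHull hv
    letI := hι
    have hsum1' : ∑ i : ι, w i = 1 := hsum1
    have hsumx' : ∑ i : ι, w i • z i = v := hsumx
    clear hsum1 hsumx
    choose ξ hξI hξ using fun i => hzs (Set.mem_range_self i)
    have hz1 : ∀ (i : ι) (i0 : Fin k), (z i).1 i0 = Ψ i0 (ξ i) := by
      intro i i0
      rw [← hξ i]
    have hz2 : ∀ i : ι, (z i).2 = Ω (ξ i) := by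
      intro i
      rw [← hξ i]
    set σ : Measure ℝ := ∑ i : ι, (ENNReal.ofReal (t * w i)) • Measure.dirac (ξ i) with hσ
    have happ : ∀ s : Set ℝ,
        σ s = ∑ i : ι, ENNReal.ofReal (t * w i) * (Measure.dirac (ξ i)) s := by
      intro s
      rw [hσ, Measure.finset_sum_apply]
      simp [Measure.smul_apply, smul_eq_mul]
    haveI hfin : IsFiniteMeasure σ := by
      constructor
      rw [happ]
      refine ENNReal.sum_lt_top.2 fun i _ => ?_
      simp only [measure_univ, mul_one]
      exact ENNReal.ofReal_lt_top
    have hnull : σ (Set.Icc A B)ᶜ = 0 := by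
      rw [happ]
      refine Finset.sum_eq_zero fun i _ => ?_
      have hd : (Measure.dirac (ξ i)) (Set.Icc A B)ᶜ = 0 := by
        rw [Measure.dirac_apply' _ measurableSet_Icc.compl]
        exact Set.indicator_of_notMem (by simpa using hξI i) _
      rw [hd, mul_zero]
    have hIint : ∀ f : ℝ → ℝ, ∫ x, f x ∂σ = ∑ i : ι, (t * w i) * f (ξ i) := by
      intro f
      have hint : ∀ i : ι, Integrable f ((ENNReal.ofReal (t * w i)) • Measure.dirac (ξ i)) := by
        intro i
        have hd : Integrable f (Measure.dirac (ξ i)) :=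
          (integrable_const (f (ξ i))).congr (ae_eq_dirac f).symm
        exact hd.smul_measure ENNReal.ofReal_ne_top
      rw [hσ, integral_finset_sum_measure (fun i _ => hint i)]
      refine Finset.sum_congr rfl fun i _ => ?_
      rw [integral_smul_measure, integral_dirac,
        ENNReal.toReal_ofReal (mul_nonneg ht (hpos i).le), smul_eq_mul]
    have hv1 : ∀ i0 : Fin k, v.1 i0 = ∑ i : ι, w i * Ψ i0 (ξ i) := by
      intro i0
      have h := congrFun (congrArg Prod.fst hsumx') i0
      rw [Prod.fst_sum, Finset.sum_apply] at h
      simp only [Prod.smul_fst, Pi.smul_apply, smul_eq_mul] at h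
      rw [← h]
      exact (Finset.sum_congr rfl fun i _ => by rw [hz1]).symm
    have hv2 : v.2 = ∑ i : ι, w i * Ω (ξ i) := by
      have h := congrArg Prod.snd hsumx'
      rw [Prod.snd_sum] at h
      simp only [Prod.smul_snd, smul_eq_mul] at h
      rw [← h]
      exact (Finset.sum_congr rfl fun i _ => by rw [hz2]).symm
    refine ⟨σ, ⟨hfin, hnull, fun i0 => ?_⟩, ?_⟩
    · rw [hIint]
      have hc : c i0 = t * v.1 i0 := by
        have h := congrFun (congrArg Prod.fst htv) i0
        simpa [Prod.smul_fst] using h.symm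
      rw [hc, hv1, Finset.mul_sum]
      exact Finset.sum_congr rfl fun i _ => by ring
    · rw [hIint]
      have hy : y = t * v.2 := by
        have h := congrArg Prod.snd htv
        simpa [Prod.smul_snd] using h.symm
      rw [hy, hv2, Finset.mul_sum]
      exact Finset.sum_congr rfl fun i _ => by ring
  -- The cone-slice description of the value set
  set Y : Set ℝ := {y : ℝ | ∃ t : ℝ, 0 ≤ t ∧ ∃ v ∈ C, t • v = (c, y)} with hY
  have hmain : {y : ℝ | ∃ σ : Measure ℝ, IsFeasible A B Ψ c σ ∧ ∫ x, Ω x ∂σ = y} = Y := by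
    ext y
    constructor
    · rintro ⟨σ, hσ, rfl⟩
      exact dir1 σ hσ
    · rintro ⟨t, ht, v, hv, htv⟩
      exact dir2 y t ht v hv htv
  -- compactness of Y
  have himgC : (fun v : (Fin k → ℝ) × ℝ => v.1) '' C
      = convexHull ℝ ((fun t => fun i => Ψ i t) '' Set.Icc A B) := by
    rw [hC]
    have h := (LinearMap.fst ℝ (Fin k → ℝ) ℝ).image_convexHull (φ '' Set.Icc A B)
    simpa [Set.image_image, hφ] using h
  set M1 : Set (Fin k → ℝ) := convexHull ℝ ((fun t => fun i => Ψ i t) '' Set.Icc A B)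
    with hM1
  have hM1comp : IsCompact M1 := by
    rw [← himgC]
    exact hCcomp.image continuous_fst
  have hM1ne : M1.Nonempty :=
    ⟨_, subset_convexHull ℝ _ ⟨A, ⟨le_refl A, hAB.le⟩, rfl⟩⟩
  have h0M : (0 : Fin k → ℝ) ∉ M1 := aux_zero_not_mem hk hAB hCheb
  have hδ : 0 < Metric.infDist (0 : Fin k → ℝ) M1 :=
    (hM1comp.isClosed.notMem_iff_infDist_pos hM1ne).1 h0M
  set δ : ℝ := Metric.infDist (0 : Fin k → ℝ) M1 with hδdef
  have hlow : ∀ v ∈ C, δ ≤ ‖v.1‖ := by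
    intro v hv
    have h1 : v.1 ∈ M1 := by
      rw [← himgC]
      exact ⟨v, hv, rfl⟩
    calc δ ≤ dist (0 : Fin k → ℝ) v.1 := Metric.infDist_le_dist_of_mem h1
    _ = ‖v.1‖ := by rw [dist_zero_left]
  set T : ℝ := ‖c‖ / δ with hT
  have htbound : ∀ (t : ℝ) (v : (Fin k → ℝ) × ℝ), 0 ≤ t → v ∈ C → (t • v).1 = c → t ≤ T := by
    intro t v ht hv h1
    have h2 : t * ‖v.1‖ = ‖c‖ := by
      rw [← h1, Prod.smul_fst, norm_smul, Real.norm_of_nonneg ht]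
    rw [hT, le_div_iff₀ hδ]
    calc t * δ ≤ t * ‖v.1‖ := mul_le_mul_of_nonneg_left (hlow v hv) ht
    _ = ‖c‖ := h2
  set D : Set (ℝ × ((Fin k → ℝ) × ℝ)) :=
    ((Set.Icc (0:ℝ) T) ×ˢ C) ∩ {p : ℝ × ((Fin k → ℝ) × ℝ) | (p.1 • p.2).1 = c} with hD
  have hDcomp : IsCompact D :=
    (isCompact_Icc.prod hCcomp).inter_right
      (isClosed_eq ((continuous_fst.smul continuous_snd).fst) continuous_const)
  have hYD : Y = (fun p : ℝ × ((Fin k → ℝ) × ℝ) => (p.1 • p.2).2) '' D := by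
    ext y
    constructor
    · rintro ⟨t, ht, v, hv, htv⟩
      have h1 : (t • v).1 = c := by rw [htv]
      refine ⟨(t, v), ⟨⟨⟨ht, htbound t v ht hv h1⟩, hv⟩, h1⟩, ?_⟩
      show (t • v).2 = y
      rw [htv]
    · rintro ⟨⟨t, v⟩, ⟨⟨⟨ht0, _⟩, hv⟩, h1⟩, rfl⟩
      exact ⟨t, ht0, v, hv, Prod.ext_iff.2 ⟨h1, rfl⟩⟩
  have hYcomp : IsCompact Y := by
    rw [hYD]
    exact hDcomp.image ((continuous_fst.smul continuous_snd).snd)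
  -- convexity of Y
  have hYconv : Convex ℝ Y := by
    intro y1 hy1 y2 hy2 a b ha hb hab
    obtain ⟨t1, ht1, v1, hv1, htv1⟩ := hy1
    obtain ⟨t2, ht2, v2, hv2, htv2⟩ := hy2
    have hcomb : a • ((c : Fin k → ℝ), y1) + b • ((c : Fin k → ℝ), y2)
        = ((c : Fin k → ℝ), a * y1 + b * y2) := by
      simp only [Prod.smul_mk, Prod.mk_add_mk, Prod.mk.injEq, smul_eq_mul, and_true]
      rw [← add_smul, hab, one_smul]
    have e1 : (a * t1) • v1 = a • ((c : Fin k → ℝ), y1) := by rw [← smul_smul, htv1]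
    have e2 : (b * t2) • v2 = b • ((c : Fin k → ℝ), y2) := by rw [← smul_smul, htv2]
    show ∃ t : ℝ, 0 ≤ t ∧ ∃ v ∈ C, t • v = ((c : Fin k → ℝ), a • y1 + b • y2)
    rcases eq_or_lt_of_le (add_nonneg (mul_nonneg ha ht1) (mul_nonneg hb ht2)) with hzero | hpos
    · have h1 : a * t1 = 0 := by nlinarith [mul_nonneg ha ht1, mul_nonneg hb ht2]
      have h2 : b * t2 = 0 := by nlinarith [mul_nonneg ha ht1, mul_nonneg hb ht2]
      refine ⟨0, le_rfl, v1, hv1, ?_⟩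
      rw [zero_smul]
      have key : ((c : Fin k → ℝ), a * y1 + b * y2) = 0 := by
        rw [← hcomb, ← e1, ← e2, h1, h2, zero_smul, zero_smul, add_zero]
      rw [smul_eq_mul, smul_eq_mul, key]
    · set t : ℝ := a * t1 + b * t2 with htdef
      refine ⟨t, hpos.le, (a * t1 / t) • v1 + (b * t2 / t) • v2, ?_, ?_⟩
      · exact (convex_convexHull ℝ _) hv1 hv2
          (div_nonneg (mul_nonneg ha ht1) hpos.le)
          (div_nonneg (mul_nonneg hb ht2) hpos.le)
          (by field_simp; exact htdef.symm)
      · rw [smul_add, smul_smul, smul_smul]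
        have ha' : t * (a * t1 / t) = a * t1 := by field_simp
        have hb' : t * (b * t2 / t) = b * t2 := by field_simp
        rw [ha', hb', e1, e2, smul_eq_mul, smul_eq_mul, hcomb]
  -- conclusion
  have hYne : Y.Nonempty := ⟨∫ x, Ω x ∂σ₀, dir1 σ₀ hσ₀⟩
  have hconn : IsConnected Y := ⟨hYne, hYconv.isPreconnected⟩
  have hIcc := eq_Icc_of_connected_compact hconn hYcomp
  refine ⟨sInf Y, sSup Y, ?_, by rw [hmain]; exact hIcc⟩
  obtain ⟨y0, hy0⟩ := hYne
  rw [hIcc] at hy0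
  exact Set.nonempty_Icc.1 ⟨y0, hy0⟩
end
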